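/- Let $h \in (1/2,1)$. Define $u_\alpha:[0,1]\to\mathbb{R}$ to be the continuous piecewise linear function with $u_\alpha(0)=1$, $u_\alpha(1-h)=\alpha$, $u_\alpha(1)=0$. Then the function $\alpha \mapsto \int_0^1 |1-u_\alpha(x)|\,dx$ on $\mathbb{R}$ attains its minimum uniquely at $\alpha=\sqrt{2h}$. -/

import Mathlib

open MeasureTheory intervalIntegral

/-- Continuous piecewise linear function on the two-element mesh `{(0,1-h),(1-h,1)}`
with nodal values `a` at `0`, `b` at `1-h`, `c` at `1`. -/
noncomputable def pl2 (h a b c : ℝ) (x : ℝ) : ℝ :=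
  if x ≤ 1 - h then a + (b - a) * x / (1 - h)
  else b + (c - b) * (x - (1 - h)) / h

lemma lin_int (a b c d : ℝ) :
    (∫ x in a..b, (c + d * x)) = c * (b - a) + d * (b ^ 2 - a ^ 2) / 2 := by
  rw [integral_add intervalIntegrable_const
      ((continuous_mul_left d).intervalIntegrable _ _),
    intervalIntegral.integral_const, intervalIntegral.integral_const_mul, integral_id]
  simp [smul_eq_mul]; ring

lemma pl2_cont (h α : ℝ) (hh : h ≠ 1) : Continuous (pl2 h 1 α 0) := by
  have hs : (1 : ℝ) - h ≠ 0 := sub_ne_zero.2 (Ne.symm hh)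
  unfold pl2
  apply Continuous.if_le
  · exact continuous_const.add ((continuous_const.mul continuous_id).div_const _)
  · exact continuous_const.add
      ((continuous_const.mul (continuous_id.sub continuous_const)).div_const _)
  · exact continuous_id
  · exact continuous_const
  · intro x hx
    rw [hx]
    field_simp
    ring

lemma pl2_right (h α : ℝ) (hs : (1:ℝ) - h ≠ 0) {x : ℝ} (hx : 1 - h ≤ x) :
    pl2 h 1 α 0 x = α + (0 - α) * (x - (1 - h)) / h := by
  unfold pl2
  rcases le_or_gt x (1 - h) with hle | hlt
  · have hxe : x = 1 - h := le_antisymm hle hx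
    rw [if_pos hle, hxe]
    field_simp
    ring
  · rw [if_neg (not_le.2 hlt)]

lemma F_le (h α : ℝ) (hh0 : 1 / 2 < h) (hh1 : h < 1) (hα : α ≤ 1) :
    (∫ x in (0:ℝ)..1, |1 - pl2 h 1 α 0 x|) = (1 + h) / 2 - α / 2 := by
  have hh0' : 0 < h := by linarith
  have hs0 : 0 < 1 - h := by linarith
  have hcont : Continuous fun x => |1 - pl2 h 1 α 0 x| :=
    (continuous_const.sub (pl2_cont h α (by linarith))).abs
  have hsplit : (∫ x in (0:ℝ)..1, |1 - pl2 h 1 α 0 x|)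
      = (∫ x in (0:ℝ)..(1-h), |1 - pl2 h 1 α 0 x|)
        + ∫ x in (1-h:ℝ)..1, |1 - pl2 h 1 α 0 x| :=
    (integral_add_adjacent_intervals (hcont.intervalIntegrable _ _)
      (hcont.intervalIntegrable _ _)).symm
  have e1 : (∫ x in (0:ℝ)..(1-h), |1 - pl2 h 1 α 0 x|)
      = ∫ x in (0:ℝ)..(1-h), (0 + (1 - α) / (1 - h) * x) := by
    apply integral_congr
    intro x hx
    rw [Set.uIcc_of_le (by linarith)] at hx
    obtain ⟨hx0, hx1⟩ := hx
    dsimp only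
    have hv : pl2 h 1 α 0 x = 1 + (α - 1) * x / (1 - h) := if_pos hx1
    have he : 1 - pl2 h 1 α 0 x = (1 - α) / (1 - h) * x := by
      rw [hv]; field_simp; ring
    rw [he, abs_of_nonneg (mul_nonneg (div_nonneg (by linarith) hs0.le) hx0)]
    ring
  have e2 : (∫ x in (1-h:ℝ)..1, |1 - pl2 h 1 α 0 x|)
      = ∫ x in (1-h:ℝ)..1, ((1 - α - α * (1 - h) / h) + α / h * x) := by
    apply integral_congr
    intro x hx
    rw [Set.uIcc_of_le (by linarith)] at hx
    obtain ⟨hx0, hx1⟩ := hx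
    dsimp only
    have he : 1 - pl2 h 1 α 0 x = ((1 - α - α * (1 - h) / h) + α / h * x) := by
      rw [pl2_right h α (by linarith) hx0]; field_simp; ring
    have hf : (1 - α - α * (1 - h) / h) + α / h * x = (h - α * (1 - x)) / h := by
      field_simp; ring
    have hnum : 0 ≤ h - α * (1 - x) := by
      nlinarith [mul_nonneg (sub_nonneg.2 hα) (by linarith : (0:ℝ) ≤ 1 - x)]
    rw [he, abs_of_nonneg (by rw [hf]; exact div_nonneg hnum hh0'.le)]
  rw [hsplit, e1, e2, lin_int, lin_int]
  field_simp
  ring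

lemma F_gt (h α : ℝ) (hh0 : 1 / 2 < h) (hh1 : h < 1) (hα : 1 < α) :
    (∫ x in (0:ℝ)..1, |1 - pl2 h 1 α 0 x|)
      = (α + 2 * h / α) / 2 - (1 + h) / 2 := by
  have hh0' : 0 < h := by linarith
  have hs0 : 0 < 1 - h := by linarith
  have hα0 : 0 < α := by linarith
  set x₀ : ℝ := 1 - h / α with hx₀
  have hx0a : 1 - h < x₀ := by
    have : h / α < h := div_lt_self hh0' hα
    simp only [hx₀]; linarith
  have hx0b : x₀ < 1 := by
    have : 0 < h / α := div_pos hh0' hα0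
    simp only [hx₀]; linarith
  have hcont : Continuous fun x => |1 - pl2 h 1 α 0 x| :=
    (continuous_const.sub (pl2_cont h α (by linarith))).abs
  have hsplit : (∫ x in (0:ℝ)..1, |1 - pl2 h 1 α 0 x|)
      = (∫ x in (0:ℝ)..(1-h), |1 - pl2 h 1 α 0 x|)
        + ((∫ x in (1-h:ℝ)..x₀, |1 - pl2 h 1 α 0 x|)
          + ∫ x in x₀..(1:ℝ), |1 - pl2 h 1 α 0 x|) := by
    rw [integral_add_adjacent_intervals (hcont.intervalIntegrable _ _)
      (hcont.intervalIntegrable _ _),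
      integral_add_adjacent_intervals (hcont.intervalIntegrable _ _)
      (hcont.intervalIntegrable _ _)]
  have e1 : (∫ x in (0:ℝ)..(1-h), |1 - pl2 h 1 α 0 x|)
      = ∫ x in (0:ℝ)..(1-h), (0 + (α - 1) / (1 - h) * x) := by
    apply integral_congr
    intro x hx
    rw [Set.uIcc_of_le (by linarith)] at hx
    obtain ⟨hx0, hx1⟩ := hx
    dsimp only
    have hv : pl2 h 1 α 0 x = 1 + (α - 1) * x / (1 - h) := if_pos hx1
    have he : 1 - pl2 h 1 α 0 x = -((α - 1) / (1 - h) * x) := by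
      rw [hv]; field_simp; ring
    rw [he, abs_neg, abs_of_nonneg (mul_nonneg (div_nonneg (by linarith) hs0.le) hx0)]
    ring
  have e2 : (∫ x in (1-h:ℝ)..x₀, |1 - pl2 h 1 α 0 x|)
      = ∫ x in (1-h:ℝ)..x₀, ((α - 1 + α * (1 - h) / h) + (-(α / h)) * x) := by
    apply integral_congr
    intro x hx
    rw [Set.uIcc_of_le (by linarith)] at hx
    obtain ⟨hx0, hx1⟩ := hx
    dsimp only
    have hax : α * x ≤ α - h := by
      have h1 : α * x ≤ α * x₀ := mul_le_mul_of_nonneg_left hx1 hα0.le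
      have h2 : α * x₀ = α - h := by
        rw [hx₀]; field_simp
      linarith
    have he : 1 - pl2 h 1 α 0 x = -((α - 1 + α * (1 - h) / h) + (-(α / h)) * x) := by
      rw [pl2_right h α (by linarith) hx0]; field_simp; ring
    have hf : (α - 1 + α * (1 - h) / h) + (-(α / h)) * x = (α - h - α * x) / h := by
      field_simp; ring
    rw [he, abs_neg, abs_of_nonneg (by rw [hf]; exact div_nonneg (by linarith) hh0'.le)]
  have e3 : (∫ x in x₀..(1:ℝ), |1 - pl2 h 1 α 0 x|)
      = ∫ x in x₀..(1:ℝ), ((1 - α - α * (1 - h) / h) + α / h * x) := by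
    apply integral_congr
    intro x hx
    rw [Set.uIcc_of_le (by linarith)] at hx
    obtain ⟨hx0, hx1⟩ := hx
    dsimp only
    have hax : α - h ≤ α * x := by
      have h1 : α * x₀ ≤ α * x := mul_le_mul_of_nonneg_left hx0 hα0.le
      have h2 : α * x₀ = α - h := by
        rw [hx₀]; field_simp
      linarith
    have he : 1 - pl2 h 1 α 0 x = ((1 - α - α * (1 - h) / h) + α / h * x) := by
      rw [pl2_right h α (by linarith) (by linarith)]; field_simp; ring
    have hf : (1 - α - α * (1 - h) / h) + α / h * x = (α * x - (α - h)) / h := by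
      field_simp; ring
    rw [he, abs_of_nonneg (by rw [hf]; exact div_nonneg (by linarith) hh0'.le)]
  rw [hsplit, e1, e2, e3, lin_int, lin_int, lin_int]
  simp only [hx₀]
  field_simp
  ring

theorem stmt1 (h : ℝ) (hh0 : 1 / 2 < h) (hh1 : h < 1) :
    ∀ α : ℝ, α ≠ Real.sqrt (2 * h) →
      (∫ x in (0:ℝ)..1, |1 - pl2 h 1 (Real.sqrt (2 * h)) 0 x|) <
        ∫ x in (0:ℝ)..1, |1 - pl2 h 1 α 0 x| := by
  intro α hαne
  set m : ℝ := Real.sqrt (2 * h) with hm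
  have hm2 : m ^ 2 = 2 * h := Real.sq_sqrt (by linarith)
  have hm0 : 0 ≤ m := Real.sqrt_nonneg _
  have hm1 : 1 < m := by nlinarith
  rw [F_gt h m hh0 hh1 hm1]
  have hmm : 2 * h / m = m := by
    rw [← hm2]; field_simp [pow_two]
  rcases le_or_gt α 1 with hle | hgt
  · rw [F_le h α hh0 hh1 hle]
    have hsq : 0 < (m - 1) ^ 2 := pow_pos (by linarith) 2
    rw [hmm]
    nlinarith
  · rw [F_gt h α hh0 hh1 hgt]
    have hα0 : 0 < α := by linarith
    have hne : α - m ≠ 0 := sub_ne_zero.2 hαne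
    have hsq : 0 < (α - m) ^ 2 := by positivity
    rw [hmm]
    have key : (α + 2 * h / α) / 2 - (m + m) / 2 = (α - m) ^ 2 / (2 * α) := by
      field_simp
      nlinarith [hm2]
    linarith [div_pos hsq (by linarith : (0:ℝ) < 2 * α), key]
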